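/- Let 𝔄 = M_{n_1}(ℂ) ⊕ ⋯ ⊕ M_{n_k}(ℂ) and let J ⊆ {1,…,k}. Define the real-linear map † : 𝔄 → 𝔄 by (a^†)_i = a_i for i ∈ J and (a^†)_i = conj(a_i) (entrywise complex conjugation with respect to the standard basis) for i ∉ J. Then † preserves mutual strong Birkhoff–James orthogonality: if a ⊥⊥ b then a^† ⊥⊥ b^†. -/

import Mathlib

open Matrix
open scoped Matrix.Norms.L2Operator

/-- `a` is strongly Birkhoff–James orthogonal to `b`. -/
def StrongBJ {𝔄 : Type*} [NormedRing 𝔄] (a b : 𝔄) : Prop :=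
  ∀ c : 𝔄, ‖a‖ ≤ ‖a + b * c‖

/-- `a` and `b` are mutually strongly Birkhoff–James orthogonal. -/
def MutualBJ {𝔄 : Type*} [NormedRing 𝔄] (a b : 𝔄) : Prop :=
  StrongBJ a b ∧ StrongBJ b a

/-- The finite-dimensional C*-algebra `M_{n 0}(ℂ) ⊕ ⋯ ⊕ M_{n (k-1)}(ℂ)`. -/
abbrev Alg (k : ℕ) (n : Fin k → ℕ) := ∀ i : Fin k, Matrix (Fin (n i)) (Fin (n i)) ℂ

/-- The map `†`: identity on blocks indexed by `J`, entrywise conjugation elsewhere. -/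
def dagger {k : ℕ} {n : Fin k → ℕ} (J : Finset (Fin k)) (a : Alg k n) : Alg k n :=
  fun i => if i ∈ J then a i else (a i).map (starRingEnd ℂ)

lemma conj_mulVec {m : ℕ} (A : Matrix (Fin m) (Fin m) ℂ) (x : Fin m → ℂ) :
    (A.map (starRingEnd ℂ)) *ᵥ x =
      fun i => starRingEnd ℂ ((A *ᵥ fun j => starRingEnd ℂ (x j)) i) := by
  funext i
  simp [mulVec, dotProduct, map_sum, mul_comm]

lemma norm_conj_vec {m : ℕ} (x : Fin m → ℂ) :
    ‖(WithLp.equiv 2 (Fin m → ℂ)).symm (fun i => starRingEnd ℂ (x i))‖ =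
      ‖(WithLp.equiv 2 (Fin m → ℂ)).symm x‖ := by
  rw [EuclideanSpace.norm_eq, EuclideanSpace.norm_eq]
  simp

lemma conj_norm_le {m : ℕ} (A : Matrix (Fin m) (Fin m) ℂ) :
    ‖A.map (starRingEnd ℂ)‖ ≤ ‖A‖ := by
  rw [Matrix.l2_opNorm_def]
  refine ContinuousLinearMap.opNorm_le_bound _ (norm_nonneg A) fun x => ?_
  set xf : Fin m → ℂ := WithLp.equiv 2 (Fin m → ℂ) x with hxf
  have hx : x = (WithLp.equiv 2 (Fin m → ℂ)).symm xf := rfl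
  have key : ‖(LinearEquiv.trans Matrix.toEuclideanLin
      LinearMap.toContinuousLinearMap (A.map (starRingEnd ℂ))) x‖ =
      ‖(WithLp.equiv 2 (Fin m → ℂ)).symm (A *ᵥ fun j => starRingEnd ℂ (xf j))‖ := by
    rw [hx]
    show ‖(WithLp.equiv 2 (Fin m → ℂ)).symm ((A.map (starRingEnd ℂ)) *ᵥ xf)‖ = _
    rw [conj_mulVec]
    exact norm_conj_vec _
  rw [key]
  calc ‖(WithLp.equiv 2 (Fin m → ℂ)).symm (A *ᵥ fun j => starRingEnd ℂ (xf j))‖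
      ≤ ‖A‖ * ‖(WithLp.equiv 2 (Fin m → ℂ)).symm (fun j => starRingEnd ℂ (xf j))‖ :=
        Matrix.l2_opNorm_mulVec A ((WithLp.equiv 2 (Fin m → ℂ)).symm (fun j => starRingEnd ℂ (xf j)))
    _ = ‖A‖ * ‖x‖ := by rw [norm_conj_vec, ← hx]

lemma conj_conj_mat {m : ℕ} (A : Matrix (Fin m) (Fin m) ℂ) :
    (A.map (starRingEnd ℂ)).map (starRingEnd ℂ) = A := by
  ext i j; simp [Matrix.map_apply]

lemma conj_norm_eq {m : ℕ} (A : Matrix (Fin m) (Fin m) ℂ) :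
    ‖A.map (starRingEnd ℂ)‖ = ‖A‖ := by
  refine le_antisymm (conj_norm_le A) ?_
  conv_lhs => rw [← conj_conj_mat A]
  exact conj_norm_le _

lemma dagger_dagger {k : ℕ} {n : Fin k → ℕ} (J : Finset (Fin k)) (a : Alg k n) :
    dagger J (dagger J a) = a := by
  funext i
  by_cases hi : i ∈ J
  · simp [dagger, hi]
  · simp only [dagger, hi, if_false]
    exact conj_conj_mat _

lemma dagger_mul {k : ℕ} {n : Fin k → ℕ} (J : Finset (Fin k)) (a b : Alg k n) :
    dagger J (a * b) = dagger J a * dagger J b := by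
  funext i
  by_cases hi : i ∈ J <;> simp [dagger, hi, Pi.mul_apply, Matrix.map_mul]

lemma dagger_add {k : ℕ} {n : Fin k → ℕ} (J : Finset (Fin k)) (a b : Alg k n) :
    dagger J (a + b) = dagger J a + dagger J b := by
  funext i
  by_cases hi : i ∈ J <;> simp [dagger, hi, Pi.add_apply, Matrix.map_add]

lemma norm_dagger {k : ℕ} {n : Fin k → ℕ} (J : Finset (Fin k)) (a : Alg k n) :
    ‖dagger J a‖ = ‖a‖ := by
  rw [Pi.norm_def, Pi.norm_def]
  congr 1
  refine Finset.sup_congr rfl fun i _ => ?_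
  by_cases hi : i ∈ J
  · simp [dagger, hi]
  · simp only [dagger, hi, if_false]
    exact Subtype.ext (conj_norm_eq (a i))

lemma strongBJ_dagger {k : ℕ} {n : Fin k → ℕ} (J : Finset (Fin k)) (a b : Alg k n)
    (h : StrongBJ a b) : StrongBJ (dagger J a) (dagger J b) := by
  intro c
  have : dagger J a + dagger J b * c = dagger J (a + b * dagger J c) := by
    rw [dagger_add, dagger_mul, dagger_dagger]
  rw [this, norm_dagger, norm_dagger]
  exact h _

theorem stmt10 {k : ℕ} (n : Fin k → ℕ) (J : Finset (Fin k)) (a b : Alg k n)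
    (h : MutualBJ a b) : MutualBJ (dagger J a) (dagger J b) :=
  ⟨strongBJ_dagger J a b h.1, strongBJ_dagger J b a h.2⟩
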